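/- arXiv:0712.2085 — 2 statements merged into one kernel-verified Lean document; each statement's English description precedes it below -/
import Mathlib

section
/- Let d > 1 and let k : (0,∞) → ℝ be a twice-differentiable function satisfying k''(r) + ((d-1)/r) k'(r) = k(r) for all r > 0, with k(r) → 0 as r → ∞ and k not identically zero. Then k' has no zero on (0,∞), i.e., k'(r) ≠ 0 for all r > 0. -/
open Real Filter

private lemma smono_aux (f f' : ℝ → ℝ) (a b : ℝ)
    (hder : ∀ x ∈ Set.Icc a b, HasDerivAt f (f' x) x)
    (hpos : ∀ x ∈ Set.Ioo a b, 0 < f' x) :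
    StrictMonoOn f (Set.Icc a b) := by
  apply strictMonoOn_of_deriv_pos (convex_Icc a b)
    (fun x hx => (hder x hx).continuousAt.continuousWithinAt)
  intro x hx
  rw [interior_Icc] at hx
  rw [(hder x (Set.Ioo_subset_Icc_self hx)).deriv]
  exact hpos x hx

private lemma core_bound (d m : ℝ) (hd : 1 < d) (hm : 0 < m) (k k' k'' : ℝ → ℝ)
    (hode : ∀ r > 0, k'' r + ((d - 1) / r) * k' r = k r)
    (u : ℝ) (hu : m ≤ u) :
    max |k' u| |k'' u| ≤ (1 + (d - 1) / m) * max |k u| |k' u| := by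
  have hu0 : 0 < u := lt_of_lt_of_le hm hu
  have hC : 0 ≤ (d - 1) / m := div_nonneg (by linarith) hm.le
  have hCu : 0 ≤ (d - 1) / u := div_nonneg (by linarith) hu0.le
  have hle : (d - 1) / u ≤ (d - 1) / m := by
    gcongr
  have h1 : |k'' u| ≤ |k u| + ((d - 1) / m) * |k' u| := by
    have he : k'' u = k u - ((d - 1) / u) * k' u := by
      have := hode u hu0; linarith
    rw [he]
    have h2 : |k u - ((d - 1) / u) * k' u| ≤ |k u| + |((d - 1) / u) * k' u| := abs_sub _ _
    have h3 : |((d - 1) / u) * k' u| = ((d - 1) / u) * |k' u| := by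
      rw [abs_mul, abs_of_nonneg hCu]
    nlinarith [abs_nonneg (k' u)]
  have hmax1 := le_max_left |k u| |k' u|
  have hmax2 := le_max_right |k u| |k' u|
  have hmax0 : 0 ≤ max |k u| |k' u| := le_trans (abs_nonneg _) hmax1
  refine max_le ?_ ?_
  · nlinarith [mul_nonneg hC hmax0]
  · nlinarith [mul_le_mul_of_nonneg_left hmax2 hC]

private lemma gron_zero {v v' : ℝ → ℝ × ℝ} {a b K : ℝ} (hab : a ≤ b)
    (hv : ∀ t ∈ Set.Icc a b, HasDerivAt v (v' t) t)
    (hbd : ∀ t ∈ Set.Icc a b, ‖v' t‖ ≤ K * ‖v t‖)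
    (h0 : v a = 0) : v b = 0 := by
  have hcont : ContinuousOn v (Set.Icc a b) :=
    fun t ht => (hv t ht).continuousAt.continuousWithinAt
  have key := norm_le_gronwallBound_of_norm_deriv_right_le (δ := 0) (ε := 0) (K := K)
    hcont (fun x hx => (hv x (Set.Ico_subset_Icc_self hx)).hasDerivWithinAt)
    (by simp [h0]) (fun x hx => by simpa using hbd x (Set.Ico_subset_Icc_self hx))
    b (Set.right_mem_Icc.2 hab)
  have : ‖v b‖ ≤ 0 := by simpa [gronwallBound_ε0] using key
  simpa using this

private lemma hasDerivAt_h (d : ℝ) (k k' k'' : ℝ → ℝ)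
    (hk2 : ∀ r > 0, HasDerivAt k' (k'' r) r)
    (hode : ∀ r > 0, k'' r + ((d - 1) / r) * k' r = k r)
    {r : ℝ} (hr : 0 < r) :
    HasDerivAt (fun x => x ^ (d - 1) * k' x) (r ^ (d - 1) * k r) r := by
  have h1 : HasDerivAt (fun x : ℝ => x ^ (d - 1)) ((d - 1) * r ^ (d - 1 - 1)) r :=
    Real.hasDerivAt_rpow_const (Or.inl hr.ne')
  have h2 := h1.mul (hk2 r hr)
  refine HasDerivAt.congr_deriv h2 ?_
  rw [← hode r hr]
  have hr2 : r ^ (d - 1 - 1) = r ^ (d - 1) / r := by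
    rw [Real.rpow_sub hr, Real.rpow_one]
  rw [hr2]
  field_simp
  ring

private lemma pos_case (d : ℝ) (hd : 1 < d) (k k' k'' : ℝ → ℝ)
    (hk1 : ∀ r > 0, HasDerivAt k (k' r) r)
    (hk2 : ∀ r > 0, HasDerivAt k' (k'' r) r)
    (hode : ∀ r > 0, k'' r + ((d - 1) / r) * k' r = k r)
    (hlim : Tendsto k atTop (nhds 0))
    (l : ℝ) (hl : 0 < l) (h0 : k' l = 0) (hpos : 0 < k l) : False := by
  -- Step 0 : k'' l = k l > 0
  have hk''l : k'' l = k l := by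
    have := hode l hl; rw [h0] at this; simpa using this
  -- continuity of k'' at l
  have hcontk'' : ContinuousAt k'' l := by
    have heq : (fun x => k x - ((d - 1) / x) * k' x) =ᶠ[nhds l] k'' := by
      filter_upwards [Ioi_mem_nhds hl] with x hx
      have := hode x hx
      linarith
    have hc : ContinuousAt (fun x => k x - ((d - 1) / x) * k' x) l := by
      exact ((hk1 l hl).continuousAt).sub
        (((continuousAt_const.div continuousAt_id hl.ne')).mul ((hk2 l hl).continuousAt))
    exact hc.congr heq
  have hev : ∀ᶠ x in nhds l, 0 < k'' x := by
    have h' : 0 < k'' l := by rw [hk''l]; exact hpos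
    exact hcontk''.eventually (eventually_gt_nhds h')
  obtain ⟨δ, hδ, hball⟩ := Metric.eventually_nhds_iff.1 hev
  -- on [l, l+δ/2] k'' > 0, hence k' > 0 on (l, l+δ/2], hence k > k l there
  have hk''pos : ∀ x ∈ Set.Icc l (l + δ / 2), 0 < k'' x := by
    intro x hx
    apply hball
    rw [Real.dist_eq, abs_of_nonneg (by linarith [hx.1])]
    linarith [hx.2]
  have hmem_pos : ∀ x ∈ Set.Icc l (l + δ / 2), 0 < x := fun x hx => lt_of_lt_of_le hl hx.1
  have hk'mono : StrictMonoOn k' (Set.Icc l (l + δ / 2)) :=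
    smono_aux k' k'' l (l + δ / 2) (fun x hx => hk2 x (hmem_pos x hx))
      (fun x hx => hk''pos x (Set.Ioo_subset_Icc_self hx))
  have hk'pos : ∀ t ∈ Set.Ioc l (l + δ / 2), 0 < k' t := by
    intro t ht
    have := hk'mono (Set.left_mem_Icc.2 (by linarith)) ⟨ht.1.le, ht.2⟩ ht.1
    rw [h0] at this
    exact this
  have hkmono : StrictMonoOn k (Set.Icc l (l + δ / 2)) :=
    smono_aux k k' l (l + δ / 2) (fun x hx => hk1 x (hmem_pos x hx))
      (fun x hx => hk'pos x (Set.Ioo_subset_Ioc_self hx))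
  have hδstep : ∀ t ∈ Set.Ioc l (l + δ / 2), k l < k t := by
    intro t ht
    exact hkmono (Set.left_mem_Icc.2 (by linarith)) ⟨ht.1.le, ht.2⟩ ht.1
  -- key claim : k r ≥ k l for all r ≥ l
  have key : ∀ b, l ≤ b → k l ≤ k b := by
    intro b hb
    by_contra hcon
    push_neg at hcon
    set A : Set ℝ := {t | t ∈ Set.Icc l b ∧ k t < k l} with hA
    have hbA : b ∈ A := ⟨⟨hb, le_refl b⟩, hcon⟩
    have hbdd : BddBelow A := ⟨l, fun t ht => ht.1.1⟩
    set c := sInf A with hc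
    have hc2 : c ≤ b := csInf_le hbdd hbA
    have hlowA : ∀ t ∈ A, l + δ / 2 < t := by
      intro t ht
      by_contra hlt
      push_neg at hlt
      rcases eq_or_lt_of_le ht.1.1 with heq | hlt2
      · exact absurd ht.2 (by rw [← heq]; exact lt_irrefl _)
      · exact absurd ht.2 (not_lt.2 (hδstep t ⟨hlt2, hlt⟩).le)
    have hc1 : l + δ / 2 ≤ c := le_csInf ⟨b, hbA⟩ (fun t ht => (hlowA t ht).le)
    have hlc : l < c := by linarith
    have hcpos : 0 < c := lt_trans hl hlc
    -- (i) below c, k ≥ k l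
    have hi : ∀ t, l ≤ t → t < c → k l ≤ k t := by
      intro t h1 h2
      by_contra hcon2
      push_neg at hcon2
      have htA : t ∈ A := ⟨⟨h1, le_trans h2.le hc2⟩, hcon2⟩
      exact absurd (csInf_le hbdd htA) (not_le.2 h2)
    -- (ii) k c ≤ k l
    have hkc : k c ≤ k l := by
      by_contra hgt
      push_neg at hgt
      have hcont := (hk1 c hcpos).continuousAt
      have hev2 : ∀ᶠ x in nhds c, k l < k x := hcont.eventually (eventually_gt_nhds hgt)
      obtain ⟨ε, hε, hb2⟩ := Metric.eventually_nhds_iff.1 hev2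
      have hle : ∀ t ∈ A, c + ε ≤ t := by
        intro t ht
        by_contra hlt
        push_neg at hlt
        have hct : c ≤ t := csInf_le hbdd ht
        have hdist : dist t c < ε := by
          rw [Real.dist_eq, abs_of_nonneg (by linarith)]
          linarith
        exact absurd ht.2 (not_lt.2 (hb2 hdist).le)
      have : c + ε ≤ c := le_csInf ⟨b, hbA⟩ hle
      linarith
    -- (iv) k' c > 0 via h(r) = r^(d-1) k' r
    have hmono : StrictMonoOn (fun x => x ^ (d - 1) * k' x) (Set.Icc l c) := by
      apply smono_aux _ (fun x => x ^ (d - 1) * k x)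
      · intro x hx
        exact hasDerivAt_h d k k' k'' hk2 hode (lt_of_lt_of_le hl hx.1)
      · intro x hx
        have hx0 : 0 < x := lt_of_lt_of_le hl hx.1.le
        have hkx : 0 < k x := lt_of_lt_of_le hpos (hi x hx.1.le hx.2)
        exact mul_pos (Real.rpow_pos_of_pos hx0 _) hkx
    have hhlt := hmono (Set.left_mem_Icc.2 hlc.le) (Set.right_mem_Icc.2 hlc.le) hlc
    simp only [h0, mul_zero] at hhlt
    have hk'c : 0 < k' c := by
      nlinarith [Real.rpow_pos_of_pos hcpos (d - 1)]
    -- (v) contradiction: k decreasing just before c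
    have hcont' := (hk2 c hcpos).continuousAt
    have hev3 : ∀ᶠ x in nhds c, 0 < k' x := hcont'.eventually (eventually_gt_nhds hk'c)
    obtain ⟨ε, hε, hb3⟩ := Metric.eventually_nhds_iff.1 hev3
    set ε₂ := min (ε / 2) ((c - l) / 2) with hε₂def
    have hε₂pos : 0 < ε₂ := lt_min (by linarith) (by linarith)
    have hε₂a : ε₂ ≤ ε / 2 := min_le_left _ _
    have hε₂b : ε₂ ≤ (c - l) / 2 := min_le_right _ _
    set t₀ := c - ε₂ with ht₀def
    have ht₀l : l < t₀ := by
      have : ε₂ < c - l := by linarith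
      simp only [ht₀def]
      linarith
    have ht₀c : t₀ < c := by simp only [ht₀def]; linarith
    have hkmono2 : StrictMonoOn k (Set.Icc t₀ c) := by
      apply smono_aux k k'
      · intro x hx
        exact hk1 x (lt_trans hl (lt_of_lt_of_le ht₀l hx.1))
      · intro x hx
        apply hb3
        rw [Real.dist_eq, abs_of_nonpos (by linarith [hx.2])]
        have : t₀ < x := hx.1
        simp only [ht₀def] at this
        linarith
    have hlt2 : k t₀ < k c :=
      hkmono2 (Set.left_mem_Icc.2 ht₀c.le) (Set.right_mem_Icc.2 ht₀c.le) ht₀c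
    have := hi t₀ ht₀l.le ht₀c
    linarith
  -- contradiction with decay
  have hfin : k l ≤ 0 :=
    ge_of_tendsto hlim (Filter.eventually_atTop.2 ⟨l, key⟩)
  linarith

/-- A decaying, not identically zero solution of `k'' + ((d-1)/r) k' = k` on `(0,∞)`
has nonvanishing derivative on `(0,∞)`. -/
theorem stmt0 (d : ℝ) (hd : 1 < d) (k k' k'' : ℝ → ℝ)
    (hk1 : ∀ r > 0, HasDerivAt k (k' r) r)
    (hk2 : ∀ r > 0, HasDerivAt k' (k'' r) r)
    (hode : ∀ r > 0, k'' r + ((d - 1) / r) * k' r = k r)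
    (hlim : Tendsto k atTop (nhds 0))
    (hne : ∃ r > 0, k r ≠ 0) :
    ∀ r > 0, k' r ≠ 0 := by
  intro r₀ hr₀ h0
  rcases lt_trichotomy (k r₀) 0 with hneg | hzero | hposi
  · -- apply pos_case to -k
    apply pos_case d hd (fun x => -k x) (fun x => -k' x) (fun x => -k'' x)
      (fun r hr => (hk1 r hr).neg) (fun r hr => (hk2 r hr).neg)
      (fun r hr => by have := hode r hr; ring_nf; ring_nf at this; linarith)
      (by simpa using hlim.neg) r₀ hr₀ (by simp [h0]) (by simpa using hneg)
  · -- Gronwall: k ≡ 0, contradiction with hne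
    obtain ⟨r₁, hr₁, hkne⟩ := hne
    rcases le_total r₀ r₁ with hle | hle
    · -- forward
      have hz : (fun t => (k t, k' t)) r₁ = 0 := by
        apply gron_zero (v' := fun t => (k' t, k'' t)) hle
        · intro t ht
          have ht0 : 0 < t := lt_of_lt_of_le hr₀ ht.1
          exact (hk1 t ht0).prodMk (hk2 t ht0)
        · intro t ht
          have hb := core_bound d r₀ hd hr₀ k k' k'' hode t ht.1
          simpa [Prod.norm_def, Real.norm_eq_abs] using hb
        · simp [hzero, h0, Prod.ext_iff]
      simp only [Prod.ext_iff] at hz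
      exact hkne hz.1
    · -- backward : time reversal
      set s := r₀ + r₁ with hs
      have hmem : ∀ t ∈ Set.Icc r₁ r₀, 0 < s - t ∧ r₁ ≤ s - t := by
        intro t ht
        constructor
        · simp only [hs]; linarith [ht.2, hr₁]
        · simp only [hs]; linarith [ht.2]
      have hz : (fun t => (k (s - t), -k' (s - t))) r₀ = 0 := by
        apply gron_zero (v' := fun t => (k' (s - t) * (-1), -(k'' (s - t) * (-1)))) hle
        · intro t ht
          obtain ⟨hu0, hu1⟩ := hmem t ht
          have hst : HasDerivAt (fun t : ℝ => s - t) (-1) t := by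
            simpa using (hasDerivAt_id t).const_sub s
          exact ((hk1 _ hu0).comp t hst).prodMk ((hk2 _ hu0).comp t hst).neg
        · intro t ht
          obtain ⟨hu0, hu1⟩ := hmem t ht
          have hb := core_bound d r₁ hd hr₁ k k' k'' hode (s - t) hu1
          simpa [Prod.norm_def, Real.norm_eq_abs, mul_neg_one, abs_neg] using hb
        · have : s - r₁ = r₀ := by simp [hs]
          simp [this, hzero, h0, Prod.ext_iff]
      have hsr : s - r₀ = r₁ := by simp [hs]
      simp only [hsr, Prod.ext_iff] at hz
      exact hkne hz.1
  · exact pos_case d hd k k' k'' hk1 hk2 hode hlim r₀ hr₀ h0 hposi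
end

section
/- Let d > 2. The kernel K(x,y) on [1,∞)² defined by K(x,y) = x^{1−d} y^{1−d} for x ≤ y and K(x,y) = x^{−d} y^{2−d} for x > y defines a bounded operator on L^p([1,∞); x^{d−1} dx) for all 1 < p < d, and the operator with this kernel is unbounded on L^d([1,∞); x^{d−1} dx). -/
open Real MeasureTheory Set ENNReal Filter

/-- The measure `x^{d-1} dx` on `[1,∞)`. -/
noncomputable def muD (d : ℝ) : Measure ℝ :=
  (volume.withDensity fun x => ENNReal.ofReal (x ^ (d - 1))).restrict (Ici 1)

/-- The kernel `K(x,y) = x^{1-d} y^{1-d}` for `x ≤ y`, `x^{-d} y^{2-d}` for `x > y`. -/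
noncomputable def Kd (d : ℝ) (x y : ℝ) : ℝ :=
  if x ≤ y then x ^ (1 - d) * y ^ (1 - d) else x ^ (-d) * y ^ (2 - d)

noncomputable def DD (d : ℝ) (x : ℝ) : ℝ≥0∞ := ENNReal.ofReal (x ^ (d - 1))

@[fun_prop]
lemma DD_meas (d : ℝ) : Measurable (DD d) := by unfold DD; fun_prop

noncomputable def K1 (d : ℝ) (x y : ℝ) : ℝ≥0∞ :=
  if x ≤ y then ENNReal.ofReal (x ^ (1 - d) * y ^ (1 - d)) else 0

noncomputable def K2 (d : ℝ) (x y : ℝ) : ℝ≥0∞ :=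
  if x ≤ y then 0 else ENNReal.ofReal (x ^ (-d) * y ^ (2 - d))

lemma Kd_split (d x y : ℝ) : ENNReal.ofReal (Kd d x y) = K1 d x y + K2 d x y := by
  unfold Kd K1 K2; split <;> simp

@[fun_prop]
lemma K1_meas (d : ℝ) : Measurable (Function.uncurry (K1 d)) := by
  unfold K1
  exact Measurable.ite (measurableSet_le measurable_fst measurable_snd) (by fun_prop)
    measurable_const

@[fun_prop]
lemma K2_meas (d : ℝ) : Measurable (Function.uncurry (K2 d)) := by
  unfold K2
  exact Measurable.ite (measurableSet_le measurable_fst measurable_snd) measurable_const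
    (by fun_prop)

lemma lint_Ici_rpow {a x : ℝ} (ha : a < -1) (hx : 0 < x) :
    ∫⁻ y in Ici x, ENNReal.ofReal (y ^ a) = ENNReal.ofReal (x ^ (a + 1) / (-a - 1)) := by
  rw [← Measure.restrict_congr_set Ioi_ae_eq_Ici,
    ← ofReal_integral_eq_lintegral_ofReal (integrableOn_Ioi_rpow_of_lt ha hx)
      ((ae_restrict_iff' measurableSet_Ioi).2 (ae_of_all _ fun y hy =>
        Real.rpow_nonneg (le_of_lt (lt_trans hx hy)) a))]
  rw [integral_Ioi_rpow_of_lt ha hx]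
  congr 1
  rw [show (-a-1 : ℝ) = -(a+1) by ring, div_neg, neg_div]

-- condition A1 : weight x^(-s), needs s*q > 1, d > 2

lemma condA1 {d s q : ℝ} (hd : 2 < d) (hsq : 1 < s * q) (hq : 0 < q)
    {x : ℝ} (hx : x ∈ Ici (1:ℝ)) :
    ∫⁻ y in Ici (1:ℝ), K1 d x y * (ENNReal.ofReal (y ^ (-s)))^q * DD d y
      ≤ ENNReal.ofReal (1/(s*q-1)) * (ENNReal.ofReal (x ^ (-s)))^q := by
  simp only [mem_Ici] at hx
  have hx0 : (0:ℝ) < x := lt_of_lt_of_le one_pos hx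
  have step1 : ∫⁻ y in Ici (1:ℝ), K1 d x y * (ENNReal.ofReal (y ^ (-s)))^q * DD d y
      = ∫⁻ y in Ici (1:ℝ),
          (Ici x).indicator (fun y => ENNReal.ofReal (x ^ (1-d)) * ENNReal.ofReal (y ^ (-(s*q)))) y := by
    refine setLIntegral_congr_fun measurableSet_Ici (fun y hy => ?_)
    simp only [mem_Ici] at hy
    have hy0 : (0:ℝ) < y := lt_of_lt_of_le one_pos hy
    unfold K1 DD
    rcases le_or_gt x y with h | h
    · rw [if_pos h, indicator_of_mem (mem_Ici.2 h)]
      rw [ENNReal.ofReal_rpow_of_nonneg (by positivity) hq.le,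
        ← ENNReal.ofReal_mul (by positivity), ← ENNReal.ofReal_mul (by positivity),
        ← ENNReal.ofReal_mul (by positivity)]
      congr 1
      calc x ^ (1-d) * y ^ (1-d) * (y ^ (-s)) ^ q * y ^ (d-1)
          = x ^ (1-d) * (y ^ (1-d) * y ^ (-s*q) * y ^ (d-1)) := by
            rw [← Real.rpow_mul hy0.le]; ring
        _ = x ^ (1-d) * y ^ ((1-d) + (-s*q) + (d-1)) := by
            rw [← Real.rpow_add hy0, ← Real.rpow_add hy0]
        _ = x ^ (1-d) * y ^ (-(s*q)) := by congr 1; ring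
    · rw [if_neg (not_le.2 h), indicator_of_notMem (by simp [not_le.2 h])]
      simp
  rw [step1, lintegral_indicator measurableSet_Ici, Measure.restrict_restrict measurableSet_Ici,
    inter_eq_left.2 (Ici_subset_Ici.2 hx),
    lintegral_const_mul _ (by fun_prop)]
  rw [lint_Ici_rpow (by linarith) hx0]
  rw [← ENNReal.ofReal_mul (by positivity),
    ENNReal.ofReal_rpow_of_nonneg (by positivity) hq.le,
    ← ENNReal.ofReal_mul (div_nonneg zero_le_one (by linarith))]
  apply ENNReal.ofReal_le_ofReal
  have e : (x ^ (-s)) ^ q = x ^ (-(s*q)) := by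
    rw [← Real.rpow_mul hx0.le]; congr 1; ring
  rw [e, show -(-(s*q)) - 1 = s*q - 1 by ring]
  calc x ^ (1-d) * (x ^ (-(s*q) + 1) / (s*q-1))
      = x ^ ((1-d) + (-(s*q)+1)) / (s*q-1) := by
        rw [Real.rpow_add hx0 (1-d) (-(s*q)+1)]; ring
    _ ≤ x ^ (-(s*q)) / (s*q-1) := by
        have hc : (0:ℝ) ≤ (s*q-1)⁻¹ := inv_nonneg.2 (by linarith)
        rw [div_eq_mul_inv, div_eq_mul_inv]
        exact mul_le_mul_of_nonneg_right
          (Real.rpow_le_rpow_of_exponent_le hx (by linarith)) hc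
    _ = 1/(s*q-1) * x ^ (-(s*q)) := by ring

lemma condB1 {d s p : ℝ} (hd : 2 < d) (hsp : 1 < s * p) (hspd : s * p ≤ d - 1) (hp : 0 < p)
    {y : ℝ} (hy : y ∈ Ici (1:ℝ)) :
    ∫⁻ x in Ici (1:ℝ), K1 d x y * (ENNReal.ofReal (x ^ (-s)))^p * DD d x
      ≤ ENNReal.ofReal (1/(s*p-1)) * (ENNReal.ofReal (y ^ (-s)))^p := by
  simp only [mem_Ici] at hy
  have hy0 : (0:ℝ) < y := lt_of_lt_of_le one_pos hy
  have step1 : ∫⁻ x in Ici (1:ℝ), K1 d x y * (ENNReal.ofReal (x ^ (-s)))^p * DD d x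
      = ∫⁻ x in Ici (1:ℝ),
          (Iic y).indicator (fun x => ENNReal.ofReal (y ^ (1-d)) * ENNReal.ofReal (x ^ (-(s*p)))) x := by
    refine setLIntegral_congr_fun measurableSet_Ici (fun x hx => ?_)
    simp only [mem_Ici] at hx
    have hx0 : (0:ℝ) < x := lt_of_lt_of_le one_pos hx
    unfold K1 DD
    rcases le_or_gt x y with h | h
    · rw [if_pos h, indicator_of_mem (mem_Iic.2 h)]
      rw [ENNReal.ofReal_rpow_of_nonneg (by positivity) hp.le,
        ← ENNReal.ofReal_mul (by positivity), ← ENNReal.ofReal_mul (by positivity),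
        ← ENNReal.ofReal_mul (by positivity)]
      congr 1
      calc x ^ (1-d) * y ^ (1-d) * (x ^ (-s)) ^ p * x ^ (d-1)
          = y ^ (1-d) * (x ^ (1-d) * x ^ (-s*p) * x ^ (d-1)) := by
            rw [← Real.rpow_mul hx0.le]; ring
        _ = y ^ (1-d) * x ^ ((1-d) + (-s*p) + (d-1)) := by
            rw [← Real.rpow_add hx0, ← Real.rpow_add hx0]
        _ = y ^ (1-d) * x ^ (-(s*p)) := by congr 1; ring
    · rw [if_neg (not_le.2 h), indicator_of_notMem (by simp [h])]
      simp
  rw [step1, lintegral_indicator measurableSet_Iic, Measure.restrict_restrict measurableSet_Iic,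
    lintegral_const_mul _ (by fun_prop)]
  have mono : ∫⁻ x in Iic y ∩ Ici 1, ENNReal.ofReal (x ^ (-(s*p)))
      ≤ ∫⁻ x in Ici (1:ℝ), ENNReal.ofReal (x ^ (-(s*p))) :=
    lintegral_mono_set inter_subset_right
  refine le_trans (mul_le_mul_right mono _) ?_
  rw [lint_Ici_rpow (by linarith) one_pos]
  rw [Real.one_rpow, ← ENNReal.ofReal_mul (by positivity),
    ENNReal.ofReal_rpow_of_nonneg (by positivity) hp.le,
    ← ENNReal.ofReal_mul (div_nonneg zero_le_one (by linarith))]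
  apply ENNReal.ofReal_le_ofReal
  have e : (y ^ (-s)) ^ p = y ^ (-(s*p)) := by
    rw [← Real.rpow_mul hy0.le]; congr 1; ring
  rw [e, show -(-(s*p)) - 1 = s*p - 1 by ring]
  have h1 : y ^ (1-d) ≤ y ^ (-(s*p)) :=
    Real.rpow_le_rpow_of_exponent_le hy (by linarith)
  calc y ^ (1-d) * (1 / (s*p-1)) ≤ y ^ (-(s*p)) * (1/(s*p-1)) := by
        exact mul_le_mul_of_nonneg_right h1 (div_nonneg zero_le_one (by linarith))
    _ = 1/(s*p-1) * y ^ (-(s*p)) := by ring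

lemma condA2 {d q : ℝ} (hd : 2 < d) (hq : 0 < q) {x : ℝ} (hx : x ∈ Ici (1:ℝ)) :
    ∫⁻ y in Ici (1:ℝ), K2 d x y * (ENNReal.ofReal (y ^ (-q⁻¹)))^q * DD d y
      ≤ ENNReal.ofReal 1 * (ENNReal.ofReal (x ^ (-q⁻¹)))^q := by
  simp only [mem_Ici] at hx
  have hx0 : (0:ℝ) < x := lt_of_lt_of_le one_pos hx
  have step1 : ∫⁻ y in Ici (1:ℝ), K2 d x y * (ENNReal.ofReal (y ^ (-q⁻¹)))^q * DD d y
      = ∫⁻ y in Ici (1:ℝ), (Iio x).indicator (fun _ => ENNReal.ofReal (x ^ (-d))) y := by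
    refine setLIntegral_congr_fun measurableSet_Ici (fun y hy => ?_)
    simp only [mem_Ici] at hy
    have hy0 : (0:ℝ) < y := lt_of_lt_of_le one_pos hy
    unfold K2 DD
    rcases le_or_gt x y with h | h
    · rw [if_pos h, indicator_of_notMem (by simp [not_lt.2 h])]
      simp
    · rw [if_neg (not_le.2 h), indicator_of_mem (mem_Iio.2 h)]
      rw [ENNReal.ofReal_rpow_of_nonneg (by positivity) hq.le,
        ← ENNReal.ofReal_mul (by positivity), ← ENNReal.ofReal_mul (by positivity)]
      congr 1
      calc x ^ (-d) * y ^ (2-d) * (y ^ (-q⁻¹)) ^ q * y ^ (d-1)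
          = x ^ (-d) * (y ^ (2-d) * y ^ (-q⁻¹*q) * y ^ (d-1)) := by
            rw [← Real.rpow_mul hy0.le]; ring
        _ = x ^ (-d) * y ^ ((2-d) + (-q⁻¹*q) + (d-1)) := by
            rw [← Real.rpow_add hy0, ← Real.rpow_add hy0]
        _ = x ^ (-d) := by
            rw [show (2-d) + (-q⁻¹*q) + (d-1) = 1 - q⁻¹*q by ring, inv_mul_cancel₀ hq.ne']
            norm_num
  rw [step1, lintegral_indicator measurableSet_Iio, Measure.restrict_restrict measurableSet_Iio,
    setLIntegral_const]
  have : (Iio x ∩ Ici 1) = Ico 1 x := by rw [inter_comm, Ici_inter_Iio]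
  rw [this, Real.volume_Ico]
  rw [ENNReal.ofReal_rpow_of_nonneg (by positivity) hq.le,
    ← ENNReal.ofReal_mul (by positivity), ← ENNReal.ofReal_mul (by norm_num)]
  apply ENNReal.ofReal_le_ofReal
  have e : (x ^ (-q⁻¹)) ^ q = x ^ (-1 : ℝ) := by
    rw [← Real.rpow_mul hx0.le, show -q⁻¹*q = -(q⁻¹*q) by ring, inv_mul_cancel₀ hq.ne']
  rw [e, one_mul]
  calc x ^ (-d) * (x - 1) ≤ x ^ (-d) * x := by
        exact mul_le_mul_of_nonneg_left (by linarith) (by positivity)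
    _ = x ^ (-d + 1) := by rw [Real.rpow_add hx0, Real.rpow_one]
    _ ≤ x ^ (-1 : ℝ) := Real.rpow_le_rpow_of_exponent_le hx (by linarith)

lemma condB2 {d q p : ℝ} (hd : 2 < d) (hq : 0 < q) (hp : 0 < p)
    {y : ℝ} (hy : y ∈ Ici (1:ℝ)) :
    ∫⁻ x in Ici (1:ℝ), K2 d x y * (ENNReal.ofReal (x ^ (-q⁻¹)))^p * DD d x
      ≤ ENNReal.ofReal (1/(q⁻¹*p)) * (ENNReal.ofReal (y ^ (-q⁻¹)))^p := by
  simp only [mem_Ici] at hy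
  have hy0 : (0:ℝ) < y := lt_of_lt_of_le one_pos hy
  have ht : (0:ℝ) < q⁻¹ * p := by positivity
  have step1 : ∫⁻ x in Ici (1:ℝ), K2 d x y * (ENNReal.ofReal (x ^ (-q⁻¹)))^p * DD d x
      = ∫⁻ x in Ici (1:ℝ),
          (Ioi y).indicator (fun x => ENNReal.ofReal (y ^ (2-d)) * ENNReal.ofReal (x ^ (-(q⁻¹*p)-1))) x := by
    refine setLIntegral_congr_fun measurableSet_Ici (fun x hx => ?_)
    simp only [mem_Ici] at hx
    have hx0 : (0:ℝ) < x := lt_of_lt_of_le one_pos hx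
    unfold K2 DD
    rcases le_or_gt x y with h | h
    · rw [if_pos h, indicator_of_notMem (by simp [not_lt.2 h])]
      simp
    · rw [if_neg (not_le.2 h), indicator_of_mem (mem_Ioi.2 h)]
      rw [ENNReal.ofReal_rpow_of_nonneg (by positivity) hp.le,
        ← ENNReal.ofReal_mul (by positivity), ← ENNReal.ofReal_mul (by positivity),
        ← ENNReal.ofReal_mul (by positivity)]
      congr 1
      calc x ^ (-d) * y ^ (2-d) * (x ^ (-q⁻¹)) ^ p * x ^ (d-1)
          = y ^ (2-d) * (x ^ (-d) * x ^ (-q⁻¹*p) * x ^ (d-1)) := by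
            rw [← Real.rpow_mul hx0.le]; ring
        _ = y ^ (2-d) * x ^ ((-d) + (-q⁻¹*p) + (d-1)) := by
            rw [← Real.rpow_add hx0, ← Real.rpow_add hx0]
        _ = y ^ (2-d) * x ^ (-(q⁻¹*p)-1) := by congr 1; ring
  rw [step1, lintegral_indicator measurableSet_Ioi, Measure.restrict_restrict measurableSet_Ioi,
    lintegral_const_mul _ (by fun_prop)]
  have hsub : Ioi y ∩ Ici 1 ⊆ Ici y := fun z hz => mem_Ici.2 (le_of_lt (mem_Ioi.1 hz.1))
  have mono : ∫⁻ x in Ioi y ∩ Ici 1, ENNReal.ofReal (x ^ (-(q⁻¹*p)-1))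
      ≤ ∫⁻ x in Ici y, ENNReal.ofReal (x ^ (-(q⁻¹*p)-1)) := lintegral_mono_set hsub
  refine le_trans (mul_le_mul_right mono _) ?_
  rw [lint_Ici_rpow (by linarith) hy0]
  rw [ENNReal.ofReal_rpow_of_nonneg (by positivity) hp.le,
    ← ENNReal.ofReal_mul (by positivity),
    ← ENNReal.ofReal_mul (div_nonneg zero_le_one ht.le)]
  apply ENNReal.ofReal_le_ofReal
  have e : (y ^ (-q⁻¹)) ^ p = y ^ (-(q⁻¹*p)) := by
    rw [← Real.rpow_mul hy0.le]; congr 1; ring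
  rw [e, show -(q⁻¹*p)-1+1 = -(q⁻¹*p) by ring, show -(-(q⁻¹*p)-1) - 1 = q⁻¹*p by ring]
  have h1 : y ^ (2-d) ≤ 1 := Real.rpow_le_one_of_one_le_of_nonpos hy (by linarith)
  calc y ^ (2-d) * (y ^ (-(q⁻¹*p)) / (q⁻¹*p))
      ≤ 1 * (y ^ (-(q⁻¹*p)) / (q⁻¹*p)) := by
        exact mul_le_mul_of_nonneg_right h1 (by positivity)
    _ = 1/(q⁻¹*p) * y ^ (-(q⁻¹*p)) := by ring

lemma schur {d p q : ℝ} (hpq : p.HolderConjugate q)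
    {K : ℝ → ℝ → ℝ≥0∞} (hK : Measurable (Function.uncurry K))
    {w : ℝ → ℝ≥0∞} (hw : Measurable w)
    (hw0 : ∀ x ∈ Ici (1:ℝ), w x ≠ 0) (hwt : ∀ x ∈ Ici (1:ℝ), w x ≠ ⊤)
    {A B : ℝ≥0∞}
    (hA : ∀ x ∈ Ici (1:ℝ), ∫⁻ y in Ici (1:ℝ), K x y * (w y)^q * DD d y ≤ A * (w x)^q)
    (hB : ∀ y ∈ Ici (1:ℝ), ∫⁻ x in Ici (1:ℝ), K x y * (w x)^p * DD d x ≤ B * (w y)^p)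
    {g : ℝ → ℝ≥0∞} (hg : Measurable g) :
    ∫⁻ x in Ici (1:ℝ), (∫⁻ y in Ici (1:ℝ), K x y * g y * DD d y) ^ p * DD d x
      ≤ A ^ (p/q) * B * ∫⁻ y in Ici (1:ℝ), (g y)^p * DD d y := by
  have hp0 : 0 < p := hpq.pos
  have hq0 : 0 < q := hpq.symm.pos
  set μ := volume.restrict (Ici (1:ℝ)) with hμ
  set I2 : ℝ → ℝ≥0∞ := fun x => ∫⁻ y, K x y * ((w y)^p)⁻¹ * (g y)^p * DD d y ∂μ with hI2
  -- pointwise Hölder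
  have key : ∀ x ∈ Ici (1:ℝ),
      (∫⁻ y, K x y * g y * DD d y ∂μ) ≤ (A * (w x)^q)^(1/q) * (I2 x)^(1/p) := by
    intro x hx
    set u : ℝ → ℝ≥0∞ := fun y => (K x y)^(1/q) * w y * (DD d y)^(1/q) with hu
    set v : ℝ → ℝ≥0∞ := fun y => (K x y)^(1/p) * (w y)⁻¹ * g y * (DD d y)^(1/p) with hv
    have hKx : Measurable (K x) := hK.of_uncurry_left
    have h1 : ∫⁻ y, K x y * g y * DD d y ∂μ = ∫⁻ y, (u * v) y ∂μ := by
      refine lintegral_congr_ae ((ae_restrict_iff' measurableSet_Ici).2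
        (ae_of_all _ fun y hy => ?_))
      have hwy0 := hw0 y hy
      have hwyt := hwt y hy
      simp only [hu, hv, Pi.mul_apply]
      have e1 : (K x y)^(1/q) * (K x y)^(1/p) = K x y := by
        rw [← ENNReal.rpow_add_of_nonneg _ _ (by positivity) (by positivity)]
        rw [show 1/q + 1/p = 1 by
          have := hpq.inv_add_inv_eq_one; rw [one_div, one_div]; linarith]
        exact ENNReal.rpow_one _
      have e2 : (DD d y)^(1/q) * (DD d y)^(1/p) = DD d y := by
        rw [← ENNReal.rpow_add_of_nonneg _ _ (by positivity) (by positivity)]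
        rw [show 1/q + 1/p = 1 by
          have := hpq.inv_add_inv_eq_one; rw [one_div, one_div]; linarith]
        exact ENNReal.rpow_one _
      have e3 : w y * (w y)⁻¹ = 1 := ENNReal.mul_inv_cancel hwy0 hwyt
      calc K x y * g y * DD d y
          = ((K x y)^(1/q) * (K x y)^(1/p)) * (w y * (w y)⁻¹) * g y
              * ((DD d y)^(1/q) * (DD d y)^(1/p)) := by rw [e1, e2, e3]; ring
        _ = ((K x y)^(1/q) * w y * (DD d y)^(1/q))
              * ((K x y)^(1/p) * (w y)⁻¹ * g y * (DD d y)^(1/p)) := by ring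
    rw [h1]
    have hum : AEMeasurable u μ := by
      apply Measurable.aemeasurable; unfold u; fun_prop
    have hvm : AEMeasurable v μ := by
      apply Measurable.aemeasurable; unfold v; fun_prop
    refine le_trans (ENNReal.lintegral_mul_le_Lp_mul_Lq μ hpq.symm hum hvm) ?_
    have e4 : ∫⁻ y, u y ^ q ∂μ = ∫⁻ y, K x y * (w y)^q * DD d y ∂μ := by
      refine lintegral_congr fun y => ?_
      rw [hu]
      rw [ENNReal.mul_rpow_of_nonneg _ _ hq0.le, ENNReal.mul_rpow_of_nonneg _ _ hq0.le,
        ← ENNReal.rpow_mul, ← ENNReal.rpow_mul, one_div_mul_cancel hq0.ne',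
        ENNReal.rpow_one, ENNReal.rpow_one]
    have e5 : ∫⁻ y, v y ^ p ∂μ = I2 x := by
      refine lintegral_congr fun y => ?_
      rw [hv]
      rw [ENNReal.mul_rpow_of_nonneg _ _ hp0.le, ENNReal.mul_rpow_of_nonneg _ _ hp0.le,
        ENNReal.mul_rpow_of_nonneg _ _ hp0.le, ← ENNReal.rpow_mul, ← ENNReal.rpow_mul,
        one_div_mul_cancel hp0.ne', ENNReal.rpow_one, ENNReal.rpow_one,
        ENNReal.inv_rpow]
    rw [e4, e5]
    exact mul_le_mul_left (ENNReal.rpow_le_rpow (hA x hx) (by positivity)) _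
  -- raise to power p and integrate
  have step2 : ∫⁻ x, (∫⁻ y, K x y * g y * DD d y ∂μ) ^ p * DD d x ∂μ
      ≤ ∫⁻ x, A^(p/q) * ((w x)^p * I2 x * DD d x) ∂μ := by
    refine setLIntegral_mono' measurableSet_Ici fun x hx => ?_
    calc (∫⁻ y, K x y * g y * DD d y ∂μ) ^ p * DD d x
        ≤ ((A * (w x)^q)^(1/q) * (I2 x)^(1/p))^p * DD d x :=
          mul_le_mul_left (ENNReal.rpow_le_rpow (key x hx) hp0.le) _
      _ = A^(p/q) * ((w x)^p * I2 x * DD d x) := by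
          rw [ENNReal.mul_rpow_of_nonneg _ _ hp0.le, ← ENNReal.rpow_mul, ← ENNReal.rpow_mul,
            one_div_mul_cancel hp0.ne', ENNReal.rpow_one,
            ENNReal.mul_rpow_of_nonneg _ _ (by positivity : (0:ℝ) ≤ 1/q * p),
            ← ENNReal.rpow_mul]
          rw [show 1/q * p = p/q by ring, show q * (p/q) = p by field_simp]
          ring
  refine step2.trans ?_
  have hwm : Measurable fun x => (w x)^p * I2 x * DD d x := by
    have : Measurable I2 := by
      unfold I2
      apply Measurable.lintegral_prod_right
      fun_prop
    fun_prop
  rw [lintegral_const_mul _ hwm]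
  rw [mul_assoc]
  refine mul_le_mul_right ?_ _
  -- Tonelli
  have swap : ∫⁻ x, (w x)^p * I2 x * DD d x ∂μ
      = ∫⁻ y, ∫⁻ x, (w x)^p * DD d x * (K x y * ((w y)^p)⁻¹ * (g y)^p * DD d y) ∂μ ∂μ := by
    have e6 : ∀ x, (w x)^p * I2 x * DD d x
        = ∫⁻ y, (w x)^p * DD d x * (K x y * ((w y)^p)⁻¹ * (g y)^p * DD d y) ∂μ := by
      intro x
      rw [lintegral_const_mul ((w x)^p * DD d x) (by fun_prop :
        Measurable fun y => K x y * ((w y)^p)⁻¹ * (g y)^p * DD d y)]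
      simp only [hI2]
      ring
    simp_rw [e6]
    exact lintegral_lintegral_swap (by apply Measurable.aemeasurable; fun_prop)
  rw [swap]
  have inner : ∀ y ∈ Ici (1:ℝ),
      ∫⁻ x, (w x)^p * DD d x * (K x y * ((w y)^p)⁻¹ * (g y)^p * DD d y) ∂μ
        ≤ B * ((g y)^p * DD d y) := by
    intro y hy
    have : ∫⁻ x, (w x)^p * DD d x * (K x y * ((w y)^p)⁻¹ * (g y)^p * DD d y) ∂μ
        = ((w y)^p)⁻¹ * (g y)^p * DD d y * ∫⁻ x, K x y * (w x)^p * DD d x ∂μ := by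
      rw [← lintegral_const_mul (((w y)^p)⁻¹ * (g y)^p * DD d y) (by fun_prop :
        Measurable fun x => K x y * (w x)^p * DD d x)]
      exact lintegral_congr fun x => by ring
    rw [this]
    refine (mul_le_mul_right (hB y hy) _).trans (le_of_eq ?_)
    have hwyp0 : (w y)^p ≠ 0 := by
      simp [ENNReal.rpow_eq_zero_iff, hw0 y hy, hwt y hy, hp0, hp0.not_gt]
    have hwypt : (w y)^p ≠ ⊤ := by
      simp [ENNReal.rpow_eq_top_iff, hw0 y hy, hwt y hy, hp0, hp0.not_gt]
    calc ((w y)^p)⁻¹ * (g y)^p * DD d y * (B * (w y)^p)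
        = (((w y)^p)⁻¹ * (w y)^p) * (B * ((g y)^p * DD d y)) := by ring
      _ = B * ((g y)^p * DD d y) := by rw [ENNReal.inv_mul_cancel hwyp0 hwypt, one_mul]
  calc ∫⁻ y, ∫⁻ x, (w x)^p * DD d x * (K x y * ((w y)^p)⁻¹ * (g y)^p * DD d y) ∂μ ∂μ
      ≤ ∫⁻ y, B * ((g y)^p * DD d y) ∂μ :=
        setLIntegral_mono' measurableSet_Ici inner
    _ = B * ∫⁻ y, (g y)^p * DD d y ∂μ := lintegral_const_mul _ (by fun_prop)

lemma rpow_add_le_two_rpow_mul (a b : ℝ≥0∞) {p : ℝ} (hp : 0 ≤ p) :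
    (a + b) ^ p ≤ 2 ^ p * (a ^ p + b ^ p) := by
  rcases le_total a b with h | h
  · calc (a+b)^p ≤ (2*b)^p :=
        ENNReal.rpow_le_rpow (by rw [two_mul]; exact add_le_add_left h _) hp
      _ = 2^p * b^p := ENNReal.mul_rpow_of_nonneg _ _ hp
      _ ≤ 2^p * (a^p + b^p) := mul_le_mul_right le_add_self _
  · calc (a+b)^p ≤ (2*a)^p :=
        ENNReal.rpow_le_rpow (by rw [two_mul]; exact add_le_add_right h _) hp
      _ = 2^p * a^p := ENNReal.mul_rpow_of_nonneg _ _ hp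
      _ ≤ 2^p * (a^p + b^p) := mul_le_mul_right le_self_add _

example (d : ℝ) (g : ℝ → ℝ≥0∞) (hg : Measurable g) :
    Measurable fun x => ∫⁻ y in Ici (1:ℝ), K1 d x y * g y * DD d y := by
  apply Measurable.lintegral_prod_right
  fun_prop

lemma exists_bound (d p q : ℝ) (hd : 2 < d) (hpd : p < d) (hpq : p.HolderConjugate q) :
    ∃ C : ℝ≥0∞, C ≠ ⊤ ∧ ∀ g : ℝ → ℝ≥0∞, Measurable g →
      ∫⁻ x in Ici (1:ℝ), (∫⁻ y in Ici (1:ℝ), ENNReal.ofReal (Kd d x y) * g y * DD d y) ^ p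
          * DD d x
        ≤ C * ∫⁻ y in Ici (1:ℝ), (g y)^p * DD d y := by
  have hp1 : 1 < p := hpq.lt
  have hp0 : 0 < p := hpq.pos
  have hq0 : 0 < q := hpq.symm.pos
  set s : ℝ := (max p⁻¹ q⁻¹ + (d-1)/p)/2 with hs
  have hqinv : q⁻¹ = (p-1)/p := by
    have h : p⁻¹ + q⁻¹ = 1 := hpq.inv_add_inv_eq_one
    have h2 : q⁻¹ = 1 - p⁻¹ := by linarith
    rw [h2, inv_eq_one_div]
    field_simp
  have hmax : max p⁻¹ q⁻¹ < (d-1)/p := by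
    apply max_lt
    · rw [inv_eq_one_div, div_lt_div_iff₀ hp0 hp0]
      nlinarith
    · rw [hqinv, div_lt_div_iff₀ hp0 hp0]
      nlinarith
  have hs1 : max p⁻¹ q⁻¹ < s := by rw [hs]; linarith
  have hs2 : s < (d-1)/p := by rw [hs]; linarith
  have hsq1 : 1 < s * q := by
    have h1 : q⁻¹ < s := lt_of_le_of_lt (le_max_right _ _) hs1
    calc (1:ℝ) = q⁻¹ * q := (inv_mul_cancel₀ hq0.ne').symm
      _ < s * q := mul_lt_mul_of_pos_right h1 hq0
  have hsp1 : 1 < s * p := by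
    have h1 : p⁻¹ < s := lt_of_le_of_lt (le_max_left _ _) hs1
    calc (1:ℝ) = p⁻¹ * p := (inv_mul_cancel₀ hp0.ne').symm
      _ < s * p := mul_lt_mul_of_pos_right h1 hp0
  have hspd : s * p ≤ d - 1 := by
    have h2 : s * p < (d-1)/p * p := mul_lt_mul_of_pos_right hs2 hp0
    rw [div_mul_cancel₀ _ hp0.ne'] at h2
    linarith
  set C₁ : ℝ≥0∞ := ENNReal.ofReal (1/(s*q-1)) ^ (p/q) * ENNReal.ofReal (1/(s*p-1)) with hC₁
  set C₂ : ℝ≥0∞ := ENNReal.ofReal 1 ^ (p/q) * ENNReal.ofReal (1/(q⁻¹*p)) with hC₂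
  have hpq0 : (0:ℝ) ≤ p/q := by positivity
  have hC₁t : C₁ ≠ ⊤ := by
    rw [hC₁]
    exact ENNReal.mul_ne_top (ENNReal.rpow_ne_top_of_nonneg hpq0 ENNReal.ofReal_ne_top)
      ENNReal.ofReal_ne_top
  have hC₂t : C₂ ≠ ⊤ := by
    rw [hC₂]
    exact ENNReal.mul_ne_top (ENNReal.rpow_ne_top_of_nonneg hpq0 ENNReal.ofReal_ne_top)
      ENNReal.ofReal_ne_top
  refine ⟨2^p * (C₁ + C₂), ENNReal.mul_ne_top
    (ENNReal.rpow_ne_top_of_nonneg hp0.le (by norm_num)) (ENNReal.add_ne_top.2 ⟨hC₁t, hC₂t⟩),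
    fun g hg => ?_⟩
  have hw0 : ∀ (a : ℝ) (x : ℝ), x ∈ Ici (1:ℝ) → ENNReal.ofReal (x ^ a) ≠ 0 := fun a x hx =>
    (ENNReal.ofReal_pos.2 (Real.rpow_pos_of_pos (lt_of_lt_of_le one_pos hx) a)).ne'
  have hS1 := schur (d := d) hpq (K1_meas d)
    (w := fun x => ENNReal.ofReal (x ^ (-s))) (by fun_prop)
    (fun x hx => hw0 (-s) x hx) (fun x _ => ENNReal.ofReal_ne_top)
    (fun x hx => condA1 hd hsq1 hq0 hx)
    (fun y hy => condB1 hd hsp1 hspd hp0 hy) hg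
  have hS2 := schur (d := d) hpq (K2_meas d)
    (w := fun x => ENNReal.ofReal (x ^ (-q⁻¹))) (by fun_prop)
    (fun x hx => hw0 (-q⁻¹) x hx) (fun x _ => ENNReal.ofReal_ne_top)
    (fun x hx => condA2 hd hq0 hx)
    (fun y hy => condB2 hd hq0 hp0 hy) hg
  have hsplit : ∀ x, ∫⁻ y in Ici (1:ℝ), ENNReal.ofReal (Kd d x y) * g y * DD d y
      = (∫⁻ y in Ici (1:ℝ), K1 d x y * g y * DD d y)
        + ∫⁻ y in Ici (1:ℝ), K2 d x y * g y * DD d y := by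
    intro x
    rw [← lintegral_add_left (by fun_prop : Measurable fun y => K1 d x y * g y * DD d y)]
    exact lintegral_congr fun y => by rw [Kd_split]; ring
  have hS1m : Measurable fun x => ∫⁻ y in Ici (1:ℝ), K1 d x y * g y * DD d y :=
    Measurable.lintegral_prod_right (by fun_prop)
  have hS2m : Measurable fun x => ∫⁻ y in Ici (1:ℝ), K2 d x y * g y * DD d y :=
    Measurable.lintegral_prod_right (by fun_prop)
  calc ∫⁻ x in Ici (1:ℝ), (∫⁻ y in Ici (1:ℝ), ENNReal.ofReal (Kd d x y) * g y * DD d y) ^ p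
          * DD d x
      = ∫⁻ x in Ici (1:ℝ), ((∫⁻ y in Ici (1:ℝ), K1 d x y * g y * DD d y)
          + ∫⁻ y in Ici (1:ℝ), K2 d x y * g y * DD d y) ^ p * DD d x := by
        exact lintegral_congr fun x => by rw [hsplit]
    _ ≤ ∫⁻ x in Ici (1:ℝ), 2^p * (((∫⁻ y in Ici (1:ℝ), K1 d x y * g y * DD d y)) ^ p
          + (∫⁻ y in Ici (1:ℝ), K2 d x y * g y * DD d y) ^ p) * DD d x :=
        setLIntegral_mono' measurableSet_Ici fun x _ =>
          mul_le_mul_left (rpow_add_le_two_rpow_mul _ _ hp0.le) _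
    _ = 2^p * ((∫⁻ x in Ici (1:ℝ), (∫⁻ y in Ici (1:ℝ), K1 d x y * g y * DD d y) ^ p * DD d x)
          + ∫⁻ x in Ici (1:ℝ), (∫⁻ y in Ici (1:ℝ), K2 d x y * g y * DD d y) ^ p * DD d x) := by
        rw [← lintegral_add_left (by fun_prop)]
        rw [← lintegral_const_mul _ (by fun_prop)]
        exact lintegral_congr fun x => by ring
    _ ≤ 2^p * (C₁ * (∫⁻ y in Ici (1:ℝ), (g y)^p * DD d y)
          + C₂ * ∫⁻ y in Ici (1:ℝ), (g y)^p * DD d y) :=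
        mul_le_mul_right (add_le_add hS1 hS2) _
    _ = 2^p * (C₁ + C₂) * ∫⁻ y in Ici (1:ℝ), (g y)^p * DD d y := by ring

noncomputable def f₀ (y : ℝ) : ℝ := if 1 ≤ y then (y * Real.log (2*y))⁻¹ else 0

lemma log2y_pos {y : ℝ} (hy : 1 ≤ y) : 0 < Real.log (2*y) :=
  Real.log_pos (by linarith)

lemma f₀_nonneg (y : ℝ) : 0 ≤ f₀ y := by
  unfold f₀
  split
  · next h =>
      have := log2y_pos h
      have h0 : (0:ℝ) < y := lt_of_lt_of_le one_pos h
      positivity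
  · exact le_refl 0

@[fun_prop] lemma f₀_meas : Measurable f₀ := by
  unfold f₀
  exact Measurable.ite measurableSet_Ici
    ((measurable_id.mul (Real.measurable_log.comp (measurable_id.const_mul 2))).inv)
    measurable_const

lemma hasDerivAt_log2 {y : ℝ} (hy : 0 < y) :
    HasDerivAt (fun z => Real.log (2*z)) y⁻¹ y := by
  have h : HasDerivAt (fun z : ℝ => 2*z) 2 y := by
    simpa using (hasDerivAt_id y).const_mul 2
  have := h.log (by positivity)
  convert this using 1
  field_simp

lemma hasDerivAt_G {d : ℝ} (hd : 2 < d) {y : ℝ} (hy : 1 ≤ y) :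
    HasDerivAt (fun z => -(d-1)⁻¹ * (Real.log (2*z)) ^ (1-d))
      ((Real.log (2*y)) ^ (-d) / y) y := by
  have hy0 : (0:ℝ) < y := lt_of_lt_of_le one_pos hy
  have hL := log2y_pos hy
  have h2 : HasDerivAt (fun u : ℝ => u ^ (1-d)) ((1-d) * (Real.log (2*y)) ^ (1-d-1))
      (Real.log (2*y)) := Real.hasDerivAt_rpow_const (Or.inl hL.ne')
  have h3 := (h2.comp y (hasDerivAt_log2 hy0)).const_mul (-(d-1)⁻¹)
  simp only [Function.comp] at h3
  have hd1 : (d:ℝ) - 1 ≠ 0 := by linarith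
  have e : -(d-1)⁻¹ * ((1-d) * Real.log (2*y) ^ (1-d-1) * y⁻¹)
      = Real.log (2*y) ^ (-d) / y := by
    rw [show (1-d-1 : ℝ) = -d by ring]
    calc -(d-1)⁻¹ * ((1-d) * Real.log (2*y) ^ (-d) * y⁻¹)
        = ((d-1)⁻¹ * (d-1)) * (Real.log (2*y) ^ (-d) * y⁻¹) := by ring
      _ = Real.log (2*y) ^ (-d) / y := by
          rw [inv_mul_cancel₀ hd1, one_mul, div_eq_mul_inv]
  rw [e] at h3
  exact h3

lemma hasDerivAt_LL {y : ℝ} (hy : 1 ≤ y) :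
    HasDerivAt (fun z => Real.log (Real.log (2*z))) ((y * Real.log (2*y))⁻¹) y := by
  have hy0 : (0:ℝ) < y := lt_of_lt_of_le one_pos hy
  have hL := log2y_pos hy
  have h := (hasDerivAt_log2 hy0).log hL.ne'
  convert h using 1
  rw [mul_inv]
  ring

lemma tendsto_log2_atTop : Tendsto (fun z : ℝ => Real.log (2*z)) atTop atTop :=
  Real.tendsto_log_atTop.comp (Tendsto.const_mul_atTop two_pos tendsto_id)

lemma memLd_f₀ {d : ℝ} (hd : 2 < d) : MemLp f₀ (ENNReal.ofReal d) (muD d) := by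
  have hd0 : (0:ℝ) < d := by linarith
  constructor
  · exact f₀_meas.aestronglyMeasurable
  · rw [eLpNorm_eq_lintegral_rpow_enorm_toReal (ENNReal.ofReal_pos.2 hd0).ne' ENNReal.ofReal_ne_top,
      ENNReal.toReal_ofReal hd0.le]
    refine ENNReal.rpow_lt_top_of_nonneg (by positivity) ?_
    have hmu : ∫⁻ x, ‖f₀ x‖ₑ ^ d ∂(muD d)
        = ∫⁻ x in Ici (1:ℝ), DD d x * ‖f₀ x‖ₑ ^ d := by
      unfold muD
      rw [restrict_withDensity measurableSet_Ici,
        lintegral_withDensity_eq_lintegral_mul _ (by fun_prop) (by fun_prop)]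
      rfl
    rw [hmu]
    have heq : ∫⁻ x in Ici (1:ℝ), DD d x * ‖f₀ x‖ₑ ^ d
        = ∫⁻ x in Ici (1:ℝ), ENNReal.ofReal ((Real.log (2*x)) ^ (-d) / x) := by
      refine setLIntegral_congr_fun measurableSet_Ici (fun x hx => ?_)
      simp only [mem_Ici] at hx
      have hx0 : (0:ℝ) < x := lt_of_lt_of_le one_pos hx
      have hL := log2y_pos hx
      have hf : f₀ x = (x * Real.log (2*x))⁻¹ := if_pos hx
      rw [hf, Real.enorm_eq_ofReal (by positivity),
        ENNReal.ofReal_rpow_of_nonneg (by positivity) hd0.le]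
      unfold DD
      rw [← ENNReal.ofReal_mul (by positivity)]
      congr 1
      have e1 : ((x * Real.log (2*x))⁻¹ : ℝ) = (x * Real.log (2*x)) ^ (-1 : ℝ) := by
        rw [Real.rpow_neg_one]
      rw [e1, ← Real.rpow_mul (by positivity : (0:ℝ) ≤ x * Real.log (2*x)),
        show ((-1)*d : ℝ) = -d by ring, Real.mul_rpow hx0.le hL.le]
      calc x ^ (d-1) * (x ^ (-d) * Real.log (2*x) ^ (-d))
          = (x ^ (d-1) * x ^ (-d)) * Real.log (2*x) ^ (-d) := by ring
        _ = x ^ (-1:ℝ) * Real.log (2*x) ^ (-d) := by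
            rw [← Real.rpow_add hx0, show (d-1+-d : ℝ) = -1 by ring]
        _ = Real.log (2*x) ^ (-d) / x := by rw [Real.rpow_neg_one]; ring
    rw [heq]
    have hInt : IntegrableOn (fun y => (Real.log (2*y)) ^ (-d) / y) (Ioi (1:ℝ)) := by
      apply integrableOn_Ioi_deriv_of_nonneg (g := fun z => -(d-1)⁻¹ * (Real.log (2*z)) ^ (1-d))
        (l := 0)
      · apply ContinuousAt.continuousWithinAt
        apply ContinuousAt.mul continuousAt_const
        have hcl : ContinuousAt (fun z : ℝ => Real.log (2*z)) 1 := by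
          have h2z : ContinuousAt (fun z : ℝ => 2*z) 1 := by fun_prop
          exact (Real.continuousAt_log (by norm_num)).comp h2z
        exact hcl.rpow_const (Or.inl (log2y_pos le_rfl).ne')
      · exact fun y hy => hasDerivAt_G hd (le_of_lt hy)
      · intro y hy
        have := log2y_pos (le_of_lt hy)
        have hy0 : (0:ℝ) < y := lt_trans one_pos hy
        positivity
      · have h1 : Tendsto (fun z : ℝ => (Real.log (2*z)) ^ (1-d)) atTop (nhds 0) := by
          rw [show (1-d : ℝ) = -(d-1) by ring]
          exact (tendsto_rpow_neg_atTop (by linarith)).comp tendsto_log2_atTop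
        have := h1.const_mul (-(d-1)⁻¹)
        simpa using this
    rw [← Measure.restrict_congr_set Ioi_ae_eq_Ici,
      ← ofReal_integral_eq_lintegral_ofReal hInt
        ((ae_restrict_iff' measurableSet_Ioi).2 (ae_of_all _ fun y hy => by
          have := log2y_pos (le_of_lt hy)
          have hy0 : (0:ℝ) < y := lt_trans one_pos hy
          positivity))]
    exact ENNReal.ofReal_lt_top.ne

lemma diverge {d : ℝ} (hd : 2 < d) {x : ℝ} (hx : 1 ≤ x) :
    ∫⁻ y in Ici (1:ℝ), ENNReal.ofReal (Kd d x y * f₀ y * y ^ (d-1)) = ⊤ := by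
  have hx0 : (0:ℝ) < x := lt_of_lt_of_le one_pos hx
  have hc : (0:ℝ) < x ^ (1-d) := Real.rpow_pos_of_pos hx0 _
  by_contra hne
  set M := (∫⁻ y in Ici (1:ℝ), ENNReal.ofReal (Kd d x y * f₀ y * y ^ (d-1))).toReal with hM
  have hLL : Tendsto (fun z : ℝ => Real.log (Real.log (2*z))) atTop atTop :=
    Real.tendsto_log_atTop.comp tendsto_log2_atTop
  obtain ⟨b, hbx, hbL⟩ := ((eventually_gt_atTop x).and
    (hLL.eventually_gt_atTop (Real.log (Real.log (2*x)) + (M+1) * x ^ (d-1)))).exists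
  set LL : ℝ → ℝ := fun z => Real.log (Real.log (2*z)) with hLLdef
  have hsub : Ioc x b ⊆ Ici (1:ℝ) := fun z hz => le_trans hx (le_of_lt hz.1)
  have hcong : ∫⁻ y in Ioc x b, ENNReal.ofReal (Kd d x y * f₀ y * y ^ (d-1))
      = ∫⁻ y in Ioc x b, ENNReal.ofReal (x ^ (1-d) * (y * Real.log (2*y))⁻¹) := by
    refine setLIntegral_congr_fun measurableSet_Ioc (fun y hy => ?_)
    have hy1 : (1:ℝ) ≤ y := le_trans hx hy.1.le
    have hy0 : (0:ℝ) < y := lt_of_lt_of_le one_pos hy1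
    unfold Kd f₀
    rw [if_pos hy.1.le, if_pos hy1]
    congr 1
    calc x ^ (1-d) * y ^ (1-d) * (y * Real.log (2*y))⁻¹ * y ^ (d-1)
        = x ^ (1-d) * (y * Real.log (2*y))⁻¹ * (y ^ (1-d) * y ^ (d-1)) := by ring
      _ = x ^ (1-d) * (y * Real.log (2*y))⁻¹ := by
          rw [← Real.rpow_add hy0, show (1-d)+(d-1) = (0:ℝ) by ring, Real.rpow_zero, mul_one]
  have hcY : ContinuousOn (fun y : ℝ => x ^ (1-d) * (y * Real.log (2*y))⁻¹) (Icc x b) := by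
    apply continuousOn_const.mul
    apply ContinuousOn.inv₀
    · apply continuousOn_id.mul
      apply Real.continuousOn_log.comp (by fun_prop : Continuous fun y : ℝ => 2*y).continuousOn
      intro y hy
      have : (1:ℝ) ≤ y := le_trans hx hy.1
      simp only [mem_compl_iff, mem_singleton_iff]
      intro h
      norm_num at h
      linarith
    · intro y hy
      have hy1 : (1:ℝ) ≤ y := le_trans hx hy.1
      have hy0 : (0:ℝ) < y := lt_of_lt_of_le one_pos hy1
      have := log2y_pos hy1
      positivity
  have hIoc : IntegrableOn (fun y : ℝ => x ^ (1-d) * (y * Real.log (2*y))⁻¹) (Ioc x b) :=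
    (hcY.integrableOn_Icc).mono_set Ioc_subset_Icc_self
  have hval : ∫ y in Ioc x b, x ^ (1-d) * (y * Real.log (2*y))⁻¹
      = x ^ (1-d) * LL b - x ^ (1-d) * LL x := by
    rw [← intervalIntegral.integral_of_le hbx.le]
    apply intervalIntegral.integral_eq_sub_of_hasDerivAt
    · intro y hy
      rw [uIcc_of_le hbx.le] at hy
      exact (hasDerivAt_LL (le_trans hx hy.1)).const_mul (x ^ (1-d))
    · apply ContinuousOn.intervalIntegrable
      rw [uIcc_of_le hbx.le]
      exact hcY
  have hlow : ENNReal.ofReal (x ^ (1-d) * LL b - x ^ (1-d) * LL x)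
      ≤ ∫⁻ y in Ici (1:ℝ), ENNReal.ofReal (Kd d x y * f₀ y * y ^ (d-1)) := by
    rw [← hval, ofReal_integral_eq_lintegral_ofReal hIoc
      ((ae_restrict_iff' measurableSet_Ioc).2 (ae_of_all _ fun y hy => by
        have hy1 : (1:ℝ) ≤ y := le_trans hx hy.1.le
        have hy0 : (0:ℝ) < y := lt_of_lt_of_le one_pos hy1
        have := log2y_pos hy1
        positivity))]
    rw [← hcong]
    exact lintegral_mono_set hsub
  rw [ENNReal.ofReal_le_iff_le_toReal hne, ← hM] at hlow
  have e1 : x ^ (1-d) * x ^ (d-1) = 1 := by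
    rw [← Real.rpow_add hx0, show (1-d)+(d-1) = (0:ℝ) by ring, Real.rpow_zero]
  have h2 : (M+1) * x ^ (d-1) < LL b - LL x := by
    simp only [hLLdef]
    linarith
  have h3 := mul_lt_mul_of_pos_left h2 hc
  have h4 : x ^ (1-d) * ((M+1) * x ^ (d-1)) = M + 1 := by
    calc x ^ (1-d) * ((M+1) * x ^ (d-1)) = (M+1) * (x ^ (1-d) * x ^ (d-1)) := by ring
      _ = M + 1 := by rw [e1, mul_one]
  have h5 : x ^ (1-d) * (LL b - LL x) = x ^ (1-d) * LL b - x ^ (1-d) * LL x := by ring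
  linarith

@[fun_prop]
lemma Kd_meas (d : ℝ) : Measurable (Function.uncurry (Kd d)) := by
  unfold Kd
  exact Measurable.ite (measurableSet_le measurable_fst measurable_snd) (by fun_prop)
    (by fun_prop)

lemma Kd_nonneg {d x y : ℝ} (hx : 0 < x) (hy : 0 < y) : 0 ≤ Kd d x y := by
  unfold Kd
  split <;> positivity

lemma muD_eq (d : ℝ) : muD d = (volume.restrict (Ici (1:ℝ))).withDensity (DD d) := by
  unfold muD DD
  rw [restrict_withDensity measurableSet_Ici]

lemma vol_ac {d : ℝ} (hd : 2 < d) : volume.restrict (Ici (1:ℝ)) ≪ muD d := by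
  rw [muD_eq]
  apply withDensity_absolutelyContinuous' (DD_meas d).aemeasurable
  refine (ae_restrict_iff' measurableSet_Ici).2 (ae_of_all _ fun x hx => ?_)
  unfold DD
  exact (ENNReal.ofReal_pos.2 (Real.rpow_pos_of_pos (lt_of_lt_of_le one_pos hx) _)).ne'

lemma eLp_eq {d p : ℝ} (hp0 : 0 < p) (u : ℝ → ℝ) (hu : Measurable u) :
    eLpNorm u (ENNReal.ofReal p) (muD d)
      = (∫⁻ x in Ici (1:ℝ), (‖u x‖₊ : ℝ≥0∞) ^ p * DD d x) ^ (1/p) := by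
  rw [eLpNorm_eq_lintegral_rpow_enorm_toReal (ENNReal.ofReal_pos.2 hp0).ne' ENNReal.ofReal_ne_top,
    ENNReal.toReal_ofReal hp0.le, muD_eq,
    lintegral_withDensity_eq_lintegral_mul _ (DD_meas d) (by fun_prop)]
  congr 1
  exact lintegral_congr fun x => mul_comm _ _

/-- For `d > 2`, the operator with kernel `Kd` is bounded on `L^p([1,∞); x^{d-1}dx)`
for all `1 < p < d`, but unbounded on `L^d`: there is a nonnegative `f ∈ L^d` on which
the kernel integral diverges everywhere. -/
theorem stmt18 (d : ℝ) (hd : 2 < d) :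
    (∀ p : ℝ, 1 < p → p < d → ∃ C : ℝ≥0∞, ∀ f : ℝ → ℝ,
      MemLp f (ENNReal.ofReal p) (muD d) →
      MemLp (fun x => ∫ y in Ici (1 : ℝ), Kd d x y * f y * y ^ (d - 1))
        (ENNReal.ofReal p) (muD d) ∧
      eLpNorm (fun x => ∫ y in Ici (1 : ℝ), Kd d x y * f y * y ^ (d - 1))
          (ENNReal.ofReal p) (muD d)
        ≤ C * eLpNorm f (ENNReal.ofReal p) (muD d)) ∧
    (∃ f : ℝ → ℝ, (∀ y, 0 ≤ f y) ∧ MemLp f (ENNReal.ofReal d) (muD d) ∧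
      ∀ x ≥ 1, ∫⁻ y in Ici (1 : ℝ), ENNReal.ofReal (Kd d x y * f y * y ^ (d - 1)) = ⊤) := by
  constructor
  · intro p hp1 hpd
    have hp0 : (0:ℝ) < p := by linarith
    have hpq : p.HolderConjugate (p/(p-1)) := Real.HolderConjugate.conjExponent hp1
    obtain ⟨C0, hC0t, hC0⟩ := exists_bound d p (p/(p-1)) hd hpd hpq
    refine ⟨C0 ^ (1/p), fun f hf => ?_⟩
    have hfm := hf.1
    set f' := hfm.mk f with hf'def
    have hf'sm : StronglyMeasurable f' := hfm.stronglyMeasurable_mk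
    have haeμ : f =ᵐ[muD d] f' := hfm.ae_eq_mk
    have haev : f =ᵐ[volume.restrict (Ici (1:ℝ))] f' := haeμ.filter_mono (vol_ac hd).ae_le
    have hTeq : (fun x : ℝ => ∫ y in Ici (1:ℝ), Kd d x y * f y * y ^ (d-1))
        = fun x : ℝ => ∫ y in Ici (1:ℝ), Kd d x y * f' y * y ^ (d-1) := by
      funext x
      exact integral_congr_ae (haev.mono fun y hy => by simp only [hy])
    rw [hTeq]
    have hKdm := Kd_meas d
    have hT'sm : StronglyMeasurable fun x : ℝ => ∫ y in Ici (1:ℝ), Kd d x y * f' y * y ^ (d-1) := by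
      apply StronglyMeasurable.integral_prod_right'
        (f := fun z : ℝ × ℝ => Kd d z.1 z.2 * f' z.2 * z.2 ^ (d-1))
      apply Measurable.stronglyMeasurable
      have hf'me : Measurable f' := hf'sm.measurable
      have : Measurable fun z : ℝ × ℝ => Kd d z.1 z.2 := hKdm
      fun_prop
    set g : ℝ → ℝ≥0∞ := fun y => (‖f' y‖₊ : ℝ≥0∞) with hgdef
    have hgm : Measurable g := hf'sm.measurable.nnnorm.coe_nnreal_ennreal
    have heLpf : eLpNorm f (ENNReal.ofReal p) (muD d)
        = (∫⁻ y in Ici (1:ℝ), (g y) ^ p * DD d y) ^ (1/p) := by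
      rw [eLpNorm_congr_ae haeμ, eLp_eq hp0 f' hf'sm.measurable]
    have hgfin : (∫⁻ y in Ici (1:ℝ), (g y) ^ p * DD d y) ≠ ⊤ := by
      intro htop
      have h1 := hf.2
      rw [heLpf, htop, ENNReal.top_rpow_of_pos (by positivity)] at h1
      exact (lt_irrefl _ h1).elim
    have hptw : ∀ x ∈ Ici (1:ℝ),
        ((‖∫ y in Ici (1:ℝ), Kd d x y * f' y * y ^ (d-1)‖₊ : ℝ≥0∞))
          ≤ ∫⁻ y in Ici (1:ℝ), ENNReal.ofReal (Kd d x y) * g y * DD d y := by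
      intro x hx
      have hx0 : (0:ℝ) < x := lt_of_lt_of_le one_pos hx
      refine le_trans (enorm_integral_le_lintegral_enorm _) (le_of_eq ?_)
      refine setLIntegral_congr_fun measurableSet_Ici (fun y hy => ?_)
      have hy0 : (0:ℝ) < y := lt_of_lt_of_le one_pos hy
      rw [enorm_mul, enorm_mul,
        Real.enorm_eq_ofReal (Kd_nonneg hx0 hy0),
        Real.enorm_eq_ofReal (show (0:ℝ) ≤ y ^ (d-1) by positivity)]
      rfl
    have hbound : eLpNorm (fun x : ℝ => ∫ y in Ici (1:ℝ), Kd d x y * f' y * y ^ (d-1))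
        (ENNReal.ofReal p) (muD d)
        ≤ C0 ^ (1/p) * eLpNorm f (ENNReal.ofReal p) (muD d) := calc
      eLpNorm (fun x : ℝ => ∫ y in Ici (1:ℝ), Kd d x y * f' y * y ^ (d-1))
            (ENNReal.ofReal p) (muD d)
        = (∫⁻ x in Ici (1:ℝ),
            (‖∫ y in Ici (1:ℝ), Kd d x y * f' y * y ^ (d-1)‖₊ : ℝ≥0∞) ^ p * DD d x) ^ (1/p) :=
          eLp_eq hp0 _ hT'sm.measurable
      _ ≤ (∫⁻ x in Ici (1:ℝ),
            (∫⁻ y in Ici (1:ℝ), ENNReal.ofReal (Kd d x y) * g y * DD d y) ^ p * DD d x) ^ (1/p) := by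
          apply ENNReal.rpow_le_rpow _ (by positivity)
          exact setLIntegral_mono' measurableSet_Ici fun x hx =>
            mul_le_mul_left (ENNReal.rpow_le_rpow (hptw x hx) hp0.le) _
      _ ≤ (C0 * ∫⁻ y in Ici (1:ℝ), (g y) ^ p * DD d y) ^ (1/p) :=
          ENNReal.rpow_le_rpow (hC0 g hgm) (by positivity)
      _ = C0 ^ (1/p) * (∫⁻ y in Ici (1:ℝ), (g y) ^ p * DD d y) ^ (1/p) :=
          ENNReal.mul_rpow_of_nonneg _ _ (by positivity)
      _ = C0 ^ (1/p) * eLpNorm f (ENNReal.ofReal p) (muD d) := by rw [heLpf]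
    refine ⟨⟨hT'sm.aestronglyMeasurable, ?_⟩, hbound⟩
    exact lt_of_le_of_lt hbound (ENNReal.mul_lt_top
      (ENNReal.rpow_lt_top_of_nonneg (by positivity) hC0t) hf.2)
  · exact ⟨f₀, f₀_nonneg, memLd_f₀ hd, fun x hx => diverge hd hx⟩
end
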